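/- Let F be a field and let m, r be integers with 0 ≤ r ≤ m. Let μ : Fin m → F be injective (i.e., μ_1, …, μ_m are m distinct elements of F), and let v, w : Fin m → F satisfy ∑_{i=1}^m μ_i^t · v_i = 0 and ∑_{i=1}^m μ_i^t · w_i = 0 for every t ∈ {0, …, r−1}. If there exists a set S ⊆ Fin m with |S| ≥ m − r such that v_i = w_i for all i ∈ S, then v = w. -/
import Mathlib


/-- a vector satisfying `r` generalized Reed–Solomon parity-check
equations with distinct evaluation points is determined by any `m - r` of its
coordinates. -/
theorem stmt_0 {F : Type*} [Field F] (m r : ℕ) (hrm : r ≤ m)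
    (μ : Fin m → F) (hμ : Function.Injective μ)
    (v w : Fin m → F)
    (hv : ∀ t < r, ∑ i, μ i ^ t * v i = 0)
    (hw : ∀ t < r, ∑ i, μ i ^ t * w i = 0)
    (S : Finset (Fin m)) (hS : m - r ≤ S.card)
    (hvw : ∀ i ∈ S, v i = w i) :
    v = w := by
  set d : Fin m → F := fun i => v i - w i with hd_def
  have hdS : ∀ i ∈ S, d i = 0 := fun i hi => sub_eq_zero.mpr (hvw i hi)
  have hd : ∀ t < r, ∑ i, μ i ^ t * d i = 0 := by
    intro t ht
    simp only [hd_def, mul_sub, Finset.sum_sub_distrib]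
    rw [hv t ht, hw t ht, sub_zero]
  set T : Finset (Fin m) := Sᶜ with hT_def
  have hTcard : T.card ≤ r := by
    have h1 : T.card = m - S.card := by
      rw [hT_def, Finset.card_compl, Fintype.card_fin]
    have h2 : S.card ≤ m := by
      simpa using Finset.card_le_card (Finset.subset_univ S)
    omega
  -- key: any poly of degree < r pairs to zero with d
  have key : ∀ p : Polynomial F, p.natDegree < r →
      ∑ i, Polynomial.eval (μ i) p * d i = 0 := by
    intro p hp
    have heval : ∀ x : F, Polynomial.eval x p =
        ∑ t ∈ Finset.range r, p.coeff t * x ^ t := fun x =>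
      Polynomial.eval_eq_sum_range' hp x
    calc ∑ i, Polynomial.eval (μ i) p * d i
        = ∑ i, ∑ t ∈ Finset.range r, p.coeff t * (μ i ^ t * d i) := by
          refine Finset.sum_congr rfl fun i _ => ?_
          rw [heval, Finset.sum_mul]
          exact Finset.sum_congr rfl fun t _ => by ring
      _ = ∑ t ∈ Finset.range r, p.coeff t * ∑ i, μ i ^ t * d i := by
          rw [Finset.sum_comm]
          exact Finset.sum_congr rfl fun t _ => by rw [Finset.mul_sum]
      _ = 0 := by
          refine Finset.sum_eq_zero fun t ht => ?_
          rw [hd t (Finset.mem_range.mp ht), mul_zero]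
  -- show d vanishes everywhere
  have hdzero : ∀ i, d i = 0 := by
    intro i₀
    by_cases hi₀ : i₀ ∈ S
    · exact hdS i₀ hi₀
    · have hi₀T : i₀ ∈ T := by simpa [hT_def] using hi₀
      set p : Polynomial F := ∏ j ∈ T.erase i₀, (Polynomial.X - Polynomial.C (μ j)) with hp_def
      have hdeg : p.natDegree < r := by
        have h1 : p.natDegree = (T.erase i₀).card := by
          rw [hp_def, Polynomial.natDegree_prod _ _
            (fun j _ => Polynomial.X_sub_C_ne_zero (μ j))]
          simp [Polynomial.natDegree_X_sub_C]
        have h2 : (T.erase i₀).card = T.card - 1 := Finset.card_erase_of_mem hi₀T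
        have h3 : 1 ≤ T.card := Finset.card_pos.mpr ⟨i₀, hi₀T⟩
        omega
      have hsum := key p hdeg
      have hsum2 : ∑ i ∈ T, Polynomial.eval (μ i) p * d i = 0 := by
        rw [← hsum]
        apply Finset.sum_subset (Finset.subset_univ T)
        intro i _ hiT
        have : i ∈ S := by
          by_contra h
          exact hiT (by simpa [hT_def] using h)
        rw [hdS i this, mul_zero]
      have hsum3 : Polynomial.eval (μ i₀) p * d i₀ = 0 := by
        rw [← hsum2]
        symm
        apply Finset.sum_eq_single_of_mem i₀ hi₀T
        intro j hjT hji
        have : Polynomial.eval (μ j) p = 0 := by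
          rw [hp_def, Polynomial.eval_prod]
          apply Finset.prod_eq_zero (Finset.mem_erase.mpr ⟨hji, hjT⟩)
          simp
        rw [this, zero_mul]
      have hpne : Polynomial.eval (μ i₀) p ≠ 0 := by
        rw [hp_def, Polynomial.eval_prod]
        apply Finset.prod_ne_zero_iff.mpr
        intro j hj
        have hji : j ≠ i₀ := (Finset.mem_erase.mp hj).1
        simp only [Polynomial.eval_sub, Polynomial.eval_X, Polynomial.eval_C]
        exact sub_ne_zero.mpr fun h => hji (hμ h.symm) |>.elim
      exact (mul_eq_zero.mp hsum3).resolve_left hpne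
  funext i
  have := hdzero i
  simp only [hd_def] at this
  exact sub_eq_zero.mp this
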